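/- Let R be a ring, let m, n be positive integers, and let a ∈ R. If there exists an idempotent e ∈ a^m R a^n such that a^n (1 - e) a^m is nilpotent, then there exists an idempotent f ∈ a^n R a^m such that a^m (1 - f) a^n is nilpotent (left-right symmetry of (m,n)-regular nil cleanness). -/

import Mathlib

theorem stmt_0 {R : Type*} [Ring R] (m n : ℕ) (hm : 0 < m) (hn : 0 < n) (a : R)
    (h : ∃ e r : R, e = a ^ m * r * a ^ n ∧ IsIdempotentElem e ∧
      IsNilpotent (a ^ n * (1 - e) * a ^ m)) :
    ∃ f r : R, f = a ^ n * r * a ^ m ∧ IsIdempotentElem f ∧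
      IsNilpotent (a ^ m * (1 - f) * a ^ n) := by
  obtain ⟨e, r, he, hid, hnil⟩ := h
  set b : R := a ^ n * a ^ m with hb
  have hc : a ^ m * a ^ n = b := by
    rw [hb, ← pow_add, ← pow_add, add_comm]
  have hbc : ∀ x : R, a ^ m * (a ^ n * x) = b * x := by
    intro x; rw [← mul_assoc, hc]
  have hbc' : ∀ x : R, a ^ n * (a ^ m * x) = b * x := by
    intro x; rw [← mul_assoc, hb]
  have key : b * r * b * r * b = b * r * b := by
    have h2 : e * e = e := hid
    have h3 := congrArg (fun x => a ^ n * x * a ^ m) h2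
    simp only [he] at h3
    calc b * r * b * r * b
        = a ^ n * (a ^ m * r * a ^ n * (a ^ m * r * a ^ n)) * a ^ m := by
          rw [hb]; noncomm_ring
      _ = a ^ n * (a ^ m * r * a ^ n) * a ^ m := h3
      _ = b * r * b := by rw [hb]; noncomm_ring
  have keyc : ∀ x : R, b * (r * (b * (r * (b * x)))) = b * (r * (b * x)) := by
    intro x
    have := congrArg (fun y => y * x) key
    simpa only [mul_assoc] using this
  have keye : b * (r * (b * (r * b))) = b * (r * b) := by
    simpa only [mul_assoc] using key
  refine ⟨a ^ n * (r * b * r * b * r) * a ^ m, r * b * r * b * r, rfl, ?_, ?_⟩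
  · show _ * _ = _
    simp only [mul_assoc, hbc, hbc', hc, keyc, keye]
  · have heq : a ^ m * (1 - a ^ n * (r * b * r * b * r) * a ^ m) * a ^ n
      = a ^ n * (1 - e) * a ^ m := by
      rw [he]
      simp only [mul_sub, sub_mul, one_mul, mul_one, mul_assoc, hbc, hbc', hc, keyc, keye]
      rw [← hb]
    rw [heq]
    exact hnil
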